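/- arXiv:0907.2868 — 3 statements merged into one kernel-verified Lean document; each statement's English description precedes it below -/
import Mathlib

section
/- Let S be a finite set, p : S → ℝ, and let oY ∈ S with p(oY) ≠ 1. Then for every integer i ≥ 1, W(i, S \ {oY}, p) = (W(i, S, p) − W(i−1, S \ {oY}, p) · p(oY)) / (1 − p(oY)). (This is the paper's Equation (5): the influence of object oY can be filtered out of the stored probabilities P_{i,S^{oX}, x} to recover P_{i,S^{oX} \ {oY}, x}.) -/
/-- Rank-probability polynomial: probability that exactly `i` of the objects in `S`
occur, where object `o` occurs with probability `p o`. -/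
def W {α : Type*} [DecidableEq α] (i : ℕ) (S : Finset α) (p : α → ℝ) : ℝ :=
  ∑ T ∈ S.powersetCard i, (∏ o ∈ T, p o) * ∏ o ∈ S \ T, (1 - p o)

lemma W_insert {α : Type*} [DecidableEq α] (n : ℕ) (s : Finset α) (p : α → ℝ)
    (a : α) (ha : a ∉ s) :
    W (n + 1) (insert a s) p = W (n + 1) s p * (1 - p a) + W n s p * p a := by
  classical
  rw [W, Finset.powersetCard_succ_insert ha]
  rw [Finset.sum_union]
  · congr 1
    · rw [W, Finset.sum_mul]
      apply Finset.sum_congr rfl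
      intro T hT
      rw [Finset.mem_powersetCard] at hT
      have haT : a ∉ T := fun h => ha (hT.1 h)
      rw [Finset.insert_sdiff_of_notMem _ haT, Finset.prod_insert]
      · ring
      · simp [Finset.mem_sdiff, ha]
    · rw [Finset.sum_image, W, Finset.sum_mul]
      · apply Finset.sum_congr rfl
        intro T hT
        rw [Finset.mem_powersetCard] at hT
        have haT : a ∉ T := fun h => ha (hT.1 h)
        rw [Finset.prod_insert haT, Finset.insert_sdiff_insert]
        have h2 : s \ insert a T = s \ T := by
          rw [Finset.sdiff_insert, Finset.erase_eq_of_notMem]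
          simp [Finset.mem_sdiff, ha]
        rw [h2]; ring
      · intro x hx y hy hxy
        rw [Finset.mem_coe, Finset.mem_powersetCard] at hx hy
        have hax : a ∉ x := fun h => ha (hx.1 h)
        have hay : a ∉ y := fun h => ha (hy.1 h)
        have := congrArg (Finset.erase · a) hxy
        simpa [Finset.erase_insert, hax, hay] using this
  · rw [Finset.disjoint_left]
    intro T hT hT'
    rw [Finset.mem_powersetCard] at hT
    rw [Finset.mem_image] at hT'
    obtain ⟨u, hu, rfl⟩ := hT'
    exact ha (hT.1 (Finset.mem_insert_self a u))

/-- Equation (5): for `oY ∈ S` with `p(oY) ≠ 1` and every `i ≥ 1`,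
`W(i, S \ {oY}, p) = (W(i, S, p) − W(i−1, S \ {oY}, p) · p(oY)) / (1 − p(oY))`. -/
theorem rank_prob_adjust {α : Type*} [DecidableEq α] (S : Finset α) (p : α → ℝ)
    (oY : α) (hoY : oY ∈ S) (hp : p oY ≠ 1) (i : ℕ) (hi : 1 ≤ i) :
    W i (S.erase oY) p
      = (W i S p - W (i - 1) (S.erase oY) p * p oY) / (1 - p oY) := by
  obtain ⟨n, rfl⟩ := Nat.exists_eq_add_of_le hi
  have key : W (1 + n) S p
      = W (1 + n) (S.erase oY) p * (1 - p oY) + W n (S.erase oY) p * p oY := by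
    conv_lhs => rw [← Finset.insert_erase hoY]
    rw [show 1 + n = n + 1 from Nat.add_comm 1 n]
    exact W_insert n _ p oY (Finset.notMem_erase _ _)
  have h1 : (1 : ℝ) - p oY ≠ 0 := by
    intro h; apply hp; linarith
  have : 1 + n - 1 = n := by omega
  rw [this, key]
  field_simp
  ring
end

section
/- Let S be a finite set, p : S → ℝ, and let oY ∈ S with p(oY) ≠ 1. Define a sequence g : ℕ → ℝ recursively by g(0) = W(0, S, p) / (1 − p(oY)) and g(i+1) = (W(i+1, S, p) − g(i) · p(oY)) / (1 − p(oY)). Then g(i) = W(i, S \ {oY}, p) for every natural number i. (This is the correctness of the paper's adjustProbs algorithm, which recovers all probabilities P_{i, S^{oX} \ {oY}, x} from the stored probabilities P_{i, S^{oX}, x} by a single forward recursion.) -/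
lemma W_zero_insert {α : Type*} [DecidableEq α] (s : Finset α) (p : α → ℝ) {x : α}
    (hx : x ∉ s) : W 0 (insert x s) p = (1 - p x) * W 0 s p := by
  simp only [W, Finset.powersetCard_zero, Finset.sum_singleton, Finset.prod_empty, one_mul,
    Finset.sdiff_empty]
  rw [Finset.prod_insert hx]

lemma W_succ_insert {α : Type*} [DecidableEq α] (s : Finset α) (p : α → ℝ) {x : α}
    (hx : x ∉ s) (n : ℕ) :
    W (n + 1) (insert x s) p = (1 - p x) * W (n + 1) s p + p x * W n s p := by
  unfold W
  rw [Finset.powersetCard_succ_insert hx, Finset.sum_union, Finset.sum_image]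
  · congr 1
    · rw [Finset.mul_sum]
      refine Finset.sum_congr rfl fun T hT => ?_
      have hTs : T ⊆ s := (Finset.mem_powersetCard.1 hT).1
      have hxT : x ∉ T := fun h => hx (hTs h)
      rw [Finset.insert_sdiff_of_notMem _ hxT,
        Finset.prod_insert (fun h => hx (Finset.mem_sdiff.1 h).1)]
      ring
    · rw [Finset.mul_sum]
      refine Finset.sum_congr rfl fun T hT => ?_
      have hTs : T ⊆ s := (Finset.mem_powersetCard.1 hT).1
      have hxT : x ∉ T := fun h => hx (hTs h)
      rw [Finset.prod_insert hxT, Finset.insert_sdiff_insert,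
        Finset.sdiff_insert_of_notMem hx]
      ring
  · intro a ha b hb hab
    have hxa : x ∉ a := fun h => hx ((Finset.mem_powersetCard.1 ha).1 h)
    have hxb : x ∉ b := fun h => hx ((Finset.mem_powersetCard.1 hb).1 h)
    have := congrArg (fun t => Finset.erase t x) hab
    simpa [Finset.erase_insert, hxa, hxb] using this
  · rw [Finset.disjoint_right]
    rintro T hT2 hT
    obtain ⟨U, hU, rfl⟩ := Finset.mem_image.1 hT2
    exact hx ((Finset.mem_powersetCard.1 hT).1 (Finset.mem_insert_self x U))

/-- Correctness of `adjustProbs`: if `g(0) = W(0, S, p) / (1 − p(oY))` and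
`g(i+1) = (W(i+1, S, p) − g(i) · p(oY)) / (1 − p(oY))`, then
`g(i) = W(i, S \ {oY}, p)` for every `i`. -/
theorem adjustProbs_correct {α : Type*} [DecidableEq α] (S : Finset α) (p : α → ℝ)
    (oY : α) (hoY : oY ∈ S) (hp : p oY ≠ 1) (g : ℕ → ℝ)
    (hg0 : g 0 = W 0 S p / (1 - p oY))
    (hg : ∀ i : ℕ, g (i + 1) = (W (i + 1) S p - g i * p oY) / (1 - p oY)) :
    ∀ i : ℕ, g i = W i (S.erase oY) p := by
  have hne : (1 : ℝ) - p oY ≠ 0 := sub_ne_zero.2 (Ne.symm hp)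
  have hS : insert oY (S.erase oY) = S := Finset.insert_erase hoY
  have hx : oY ∉ S.erase oY := Finset.notMem_erase _ _
  have h0 : W 0 S p = (1 - p oY) * W 0 (S.erase oY) p := by
    conv_lhs => rw [← hS]
    exact W_zero_insert _ _ hx
  have hsucc : ∀ n, W (n + 1) S p
      = (1 - p oY) * W (n + 1) (S.erase oY) p + p oY * W n (S.erase oY) p := by
    intro n
    conv_lhs => rw [← hS]
    exact W_succ_insert _ _ hx n
  intro i
  induction i with
  | zero =>
    rw [hg0, h0]
    field_simp
  | succ n ih =>
    rw [hg n, ih, hsucc n]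
    field_simp
    ring
end

section
/- Let S be a finite set, p, p' : S ∪ {oX} → ℝ, let oY ∈ S and oX ∉ S with oX ≠ oY, suppose p(oY) ≠ 1 and p'(o) = p(o) for all o ∈ S \ {oY}. Then for every natural number i, W(i + 1, (S \ {oY}) ∪ {oX}, p') = g(i) · p'(oX) + g(i+1) · (1 − p'(oX)) and W(0, (S \ {oY}) ∪ {oX}, p') = g(0) · (1 − p'(oX)), where g is defined recursively by g(0) = W(0, S, p) / (1 − p(oY)) and g(i+1) = (W(i+1, S, p) − g(i) · p(oY)) / (1 − p(oY)). (This is the correctness of the paper's complete Case-3 step, composing adjustProbs with one dynamic-programming round: the probabilities P_{i,S^{oY}, y} of the current instance are computed from the probabilities P_{i,S^{oX}, x} of the previous instance.) -/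
lemma W_congr {α : Type*} [DecidableEq α] (i : ℕ) (S : Finset α) (p p' : α → ℝ)
    (h : ∀ o ∈ S, p o = p' o) : W i S p = W i S p' := by
  unfold W
  refine Finset.sum_congr rfl fun T hT => ?_
  have hTS : T ⊆ S := (Finset.mem_powersetCard.mp hT).1
  rw [show (∏ o ∈ T, p o) = ∏ o ∈ T, p' o from
      Finset.prod_congr rfl fun o ho => h o (hTS ho),
    show (∏ o ∈ S \ T, (1 - p o)) = ∏ o ∈ S \ T, (1 - p' o) from
      Finset.prod_congr rfl fun o ho => by rw [h o (Finset.mem_sdiff.mp ho).1]]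

lemma W_zero {α : Type*} [DecidableEq α] (S : Finset α) (p : α → ℝ) :
    W 0 S p = ∏ o ∈ S, (1 - p o) := by
  simp [W]

lemma W_insert_zero {α : Type*} [DecidableEq α] {a : α} {S : Finset α} (ha : a ∉ S)
    (p : α → ℝ) : W 0 (insert a S) p = (1 - p a) * W 0 S p := by
  rw [W_zero, W_zero, Finset.prod_insert ha]

lemma W_insert_succ {α : Type*} [DecidableEq α] {a : α} {S : Finset α} (ha : a ∉ S)
    (i : ℕ) (p : α → ℝ) :
    W (i + 1) (insert a S) p = W i S p * p a + W (i + 1) S p * (1 - p a) := by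
  unfold W
  rw [Finset.powersetCard_succ_insert ha, Finset.sum_union, Finset.sum_image]
  · have h1 : ∀ T ∈ S.powersetCard (i + 1),
        (∏ o ∈ T, p o) * ∏ o ∈ insert a S \ T, (1 - p o)
          = ((∏ o ∈ T, p o) * ∏ o ∈ S \ T, (1 - p o)) * (1 - p a) := by
      intro T hT
      have hTS : T ⊆ S := (Finset.mem_powersetCard.mp hT).1
      have haT : a ∉ T := fun h => ha (hTS h)
      rw [Finset.insert_sdiff_of_notMem _ haT,
        Finset.prod_insert (fun h => ha (Finset.mem_sdiff.mp h).1)]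
      ring
    have h2 : ∀ T ∈ S.powersetCard i,
        (∏ o ∈ insert a T, p o) * ∏ o ∈ insert a S \ insert a T, (1 - p o)
          = ((∏ o ∈ T, p o) * ∏ o ∈ S \ T, (1 - p o)) * p a := by
      intro T hT
      have hTS : T ⊆ S := (Finset.mem_powersetCard.mp hT).1
      have haT : a ∉ T := fun h => ha (hTS h)
      rw [Finset.insert_sdiff_insert, Finset.sdiff_insert_of_notMem ha,
        Finset.prod_insert haT]
      ring
    rw [Finset.sum_congr rfl h1, Finset.sum_congr rfl h2, ← Finset.sum_mul,
      ← Finset.sum_mul]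
    ring
  · intro T hT T' hT' h
    have hTS : T ⊆ S := (Finset.mem_powersetCard.mp hT).1
    have hTS' : T' ⊆ S := (Finset.mem_powersetCard.mp hT').1
    ext x
    constructor <;> intro hx
    · have : x ∈ insert a T' := h ▸ Finset.mem_insert_of_mem hx
      rcases Finset.mem_insert.mp this with rfl | hx'
      · exact absurd (hTS hx) ha
      · exact hx'
    · have : x ∈ insert a T := h ▸ Finset.mem_insert_of_mem hx
      rcases Finset.mem_insert.mp this with rfl | hx'
      · exact absurd (hTS' hx) ha
      · exact hx'
  · rw [Finset.disjoint_left]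
    intro T hT hT'
    obtain ⟨T', hT', rfl⟩ := Finset.mem_image.mp hT'
    exact ha ((Finset.mem_powersetCard.mp hT).1 (Finset.mem_insert_self a T'))

/-- Correctness of the complete Case-3 step (`adjustProbs` followed by one
dynamic-programming round): with `oY ∈ S`, `oX ∉ S`, `p(oY) ≠ 1`, `p'` agreeing
with `p` on `S \ {oY}`, and `g` the adjusted sequence, for every `i`
`W(i+1, (S \ {oY}) ∪ {oX}, p') = g(i) · p'(oX) + g(i+1) · (1 − p'(oX))` and
`W(0, (S \ {oY}) ∪ {oX}, p') = g(0) · (1 − p'(oX))`. -/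
theorem case3_correct {α : Type*} [DecidableEq α] (S : Finset α) (p p' : α → ℝ)
    (oY oX : α) (hoY : oY ∈ S) (hoX : oX ∉ S) (hXY : oX ≠ oY)
    (hp : p oY ≠ 1) (hpp' : ∀ o ∈ S.erase oY, p' o = p o) (g : ℕ → ℝ)
    (hg0 : g 0 = W 0 S p / (1 - p oY))
    (hg : ∀ i : ℕ, g (i + 1) = (W (i + 1) S p - g i * p oY) / (1 - p oY)) :
    (∀ i : ℕ, W (i + 1) (insert oX (S.erase oY)) p'
        = g i * p' oX + g (i + 1) * (1 - p' oX)) ∧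
      W 0 (insert oX (S.erase oY)) p' = g 0 * (1 - p' oX) := by
  have hne : (1 : ℝ) - p oY ≠ 0 := sub_ne_zero.mpr (Ne.symm hp)
  have hYe : oY ∉ S.erase oY := Finset.notMem_erase _ _
  have hins : insert oY (S.erase oY) = S := Finset.insert_erase hoY
  have hWS : ∀ i, W i S p = (if i = 0 then 0 else W (i - 1) (S.erase oY) p * p oY)
      + W i (S.erase oY) p * (1 - p oY) := by
    intro i
    cases i with
    | zero =>
      conv_lhs => rw [← hins]
      rw [W_insert_zero hYe, if_pos rfl]
      ring
    | succ n =>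
      conv_lhs => rw [← hins]
      rw [W_insert_succ hYe, if_neg n.succ_ne_zero]
      simp
  have hgW : ∀ i, g i = W i (S.erase oY) p := by
    intro i
    induction i with
    | zero =>
      rw [hg0, hWS 0]
      field_simp
      rw [if_pos trivial]
      ring
    | succ n ih =>
      rw [hg n, hWS (n + 1), ih]
      field_simp
      rw [if_neg n.succ_ne_zero, Nat.add_sub_cancel]
      ring
  have hgW' : ∀ i, g i = W i (S.erase oY) p' := fun i => by
    rw [hgW i, W_congr i _ p p' fun o ho => (hpp' o ho).symm]
  have hXe : oX ∉ S.erase oY := fun h => hoX (Finset.mem_of_mem_erase h)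
  constructor
  · intro i
    rw [W_insert_succ hXe, ← hgW', ← hgW']
  · rw [W_insert_zero hXe, ← hgW']
    ring
end
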